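/- Let α be a nonempty finite type and let μ be a probability distribution on α × Bool × Bool with coordinate random variables A, X, Y. Assume (i) P(A=a) > 0 for every a ∈ α, (ii) A and Y are conditionally independent given X, (iii) X and Y are not independent, and (iv) the binary form of assumption (A3) holds: P(Y=0|X=0) > P(Y=1|X=0) and P(Y=1|X=1) > P(Y=0|X=1). Then (P(Y=1) − min_a P(Y=1|A=a)) / (1 − min_a P(Y=1|A=a)) ≤ P(X=1) ≤ P(Y=1) / (max_a P(Y=1|A=a)), and max_a P(Y=1|A=a) > 0 and min_a P(Y=1|A=a) < 1. (Corollary 2: refinement under assumption (A3).) -/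

import Mathlib

open Classical in
noncomputable def pr {Ω : Type*} [Fintype Ω] (μ : Ω → ℝ) (E : Ω → Prop) : ℝ :=
  ∑ ω, if E ω then μ ω else 0

noncomputable def cpr {Ω : Type*} [Fintype Ω] (μ : Ω → ℝ) (E F : Ω → Prop) : ℝ :=
  pr μ (fun ω => E ω ∧ F ω) / pr μ F

section helpers
variable {Ω : Type*} [Fintype Ω] (μ : Ω → ℝ)

lemma pr_nonneg (hnn : ∀ ω, 0 ≤ μ ω) (E : Ω → Prop) : 0 ≤ pr μ E := by
  refine Finset.sum_nonneg fun ω _ => ?_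
  split
  · exact hnn ω
  · exact le_rfl

lemma pr_congr (E F : Ω → Prop) (h : ∀ ω, E ω ↔ F ω) : pr μ E = pr μ F := by
  have hEF : E = F := funext fun ω => propext (h ω)
  rw [hEF]

lemma pr_mono (hnn : ∀ ω, 0 ≤ μ ω) (E F : Ω → Prop) (h : ∀ ω, E ω → F ω) :
    pr μ E ≤ pr μ F := by
  refine Finset.sum_le_sum fun ω _ => ?_
  by_cases hE : E ω
  · rw [if_pos hE, if_pos (h ω hE)]
  · rw [if_neg hE]
    split
    · exact hnn ω
    · exact le_rfl

lemma pr_split (g : Ω → Bool) (E : Ω → Prop) :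
    pr μ E = pr μ (fun ω => E ω ∧ g ω = false) + pr μ (fun ω => E ω ∧ g ω = true) := by
  unfold pr
  rw [← Finset.sum_add_distrib]
  refine Finset.sum_congr rfl fun ω _ => ?_
  by_cases hE : E ω
  · cases h : g ω <;> simp [hE, h]
  · simp [hE]

lemma pr_true : pr μ (fun _ => True) = ∑ ω, μ ω := by
  unfold pr; simp

lemma pr_sum_first {α β : Type*} [Fintype α] [Fintype β] (ν : α × β → ℝ) (E : α × β → Prop) :
    ∑ a, pr ν (fun ω => E ω ∧ ω.1 = a) = pr ν E := by
  classical
  unfold pr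
  rw [Finset.sum_comm]
  refine Finset.sum_congr rfl fun ω _ => ?_
  by_cases hE : E ω
  · simp only [hE, true_and]
    rw [Finset.sum_congr rfl (fun x _ => ?_), Finset.sum_ite_eq' Finset.univ ω.1 (fun _ => ν ω)]
    · simp
    · exact if_congr eq_comm rfl rfl
  · simp [hE]

end helpers
/-- Corollary 2: refinement under assumption (A3). -/
theorem stmt3 {α : Type*} [Fintype α] [Nonempty α]
    (μ : α × Bool × Bool → ℝ)
    (hnn : ∀ ω, 0 ≤ μ ω) (hsum : ∑ ω, μ ω = 1)
    (hA : ∀ a : α, 0 < pr μ (fun ω => ω.1 = a))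
    (hCI : ∀ (a : α) (y x : Bool), 0 < pr μ (fun ω => ω.2.1 = x) →
      cpr μ (fun ω => ω.1 = a ∧ ω.2.2 = y) (fun ω => ω.2.1 = x) =
        cpr μ (fun ω => ω.1 = a) (fun ω => ω.2.1 = x) *
          cpr μ (fun ω => ω.2.2 = y) (fun ω => ω.2.1 = x))
    (hdep : ¬ ∀ x y : Bool,
      pr μ (fun ω => ω.2.1 = x ∧ ω.2.2 = y) =
        pr μ (fun ω => ω.2.1 = x) * pr μ (fun ω => ω.2.2 = y))
    (hA3₀ : cpr μ (fun ω => ω.2.2 = true) (fun ω => ω.2.1 = false) <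
            cpr μ (fun ω => ω.2.2 = false) (fun ω => ω.2.1 = false))
    (hA3₁ : cpr μ (fun ω => ω.2.2 = false) (fun ω => ω.2.1 = true) <
            cpr μ (fun ω => ω.2.2 = true) (fun ω => ω.2.1 = true)) :
    (pr μ (fun ω => ω.2.2 = true) -
        Finset.univ.inf' Finset.univ_nonempty
          (fun a : α => cpr μ (fun ω => ω.2.2 = true) (fun ω => ω.1 = a))) /
      (1 - Finset.univ.inf' Finset.univ_nonempty
          (fun a : α => cpr μ (fun ω => ω.2.2 = true) (fun ω => ω.1 = a))) ≤
      pr μ (fun ω => ω.2.1 = true) ∧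
    pr μ (fun ω => ω.2.1 = true) ≤
      pr μ (fun ω => ω.2.2 = true) /
        Finset.univ.sup' Finset.univ_nonempty
          (fun a : α => cpr μ (fun ω => ω.2.2 = true) (fun ω => ω.1 = a)) ∧
    0 < Finset.univ.sup' Finset.univ_nonempty
          (fun a : α => cpr μ (fun ω => ω.2.2 = true) (fun ω => ω.1 = a)) ∧
    Finset.univ.inf' Finset.univ_nonempty
          (fun a : α => cpr μ (fun ω => ω.2.2 = true) (fun ω => ω.1 = a)) < 1 := by
  classical
  -- positivity of P(X = x)
  have hX0pos : 0 < pr μ (fun ω => ω.2.1 = false) := by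
    rcases lt_or_eq_of_le (pr_nonneg μ hnn (fun ω => ω.2.1 = false)) with h | h
    · exact h
    · exfalso
      have := hA3₀
      rw [cpr, cpr, ← h, div_zero, div_zero] at this
      exact lt_irrefl 0 this
  have hX1pos : 0 < pr μ (fun ω => ω.2.1 = true) := by
    rcases lt_or_eq_of_le (pr_nonneg μ hnn (fun ω => ω.2.1 = true)) with h | h
    · exact h
    · exfalso
      have := hA3₁
      rw [cpr, cpr, ← h, div_zero, div_zero] at this
      exact lt_irrefl 0 this
  set p0 : ℝ := pr μ (fun ω => ω.2.1 = false) with hp0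
  set p1 : ℝ := pr μ (fun ω => ω.2.1 = true) with hp1
  -- X partition
  have hXsum : p0 + p1 = 1 := by
    have h := pr_split μ (fun ω => ω.2.1) (fun _ => True)
    simp only [true_and] at h
    rw [pr_true, hsum] at h
    rw [hp0, hp1, ← h]
  -- conditional probabilities q0, q1
  set q0 : ℝ := cpr μ (fun ω => ω.2.2 = true) (fun ω => ω.2.1 = false) with hq0def
  set q1 : ℝ := cpr μ (fun ω => ω.2.2 = true) (fun ω => ω.2.1 = true) with hq1def
  have hcompl : ∀ x : Bool,
      cpr μ (fun ω => ω.2.2 = true) (fun ω => ω.2.1 = x) +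
      cpr μ (fun ω => ω.2.2 = false) (fun ω => ω.2.1 = x) = 1 := by
    intro x
    have hx : (0:ℝ) < pr μ (fun ω => ω.2.1 = x) := by cases x; exacts [hX0pos, hX1pos]
    rw [cpr, cpr, ← add_div]
    rw [div_eq_one_iff_eq (ne_of_gt hx)]
    have h := pr_split μ (fun ω => ω.2.2) (fun ω => ω.2.1 = x)
    rw [pr_congr μ (fun ω => ω.2.1 = x ∧ ω.2.2 = false) (fun ω => ω.2.2 = false ∧ ω.2.1 = x)
        (fun ω => and_comm),
      pr_congr μ (fun ω => ω.2.1 = x ∧ ω.2.2 = true) (fun ω => ω.2.2 = true ∧ ω.2.1 = x)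
        (fun ω => and_comm)] at h
    linarith [h]
  have hq0half : q0 < 1/2 := by
    have h := hcompl false
    rw [← hq0def] at h
    linarith [hA3₀, h]
  have hq1half : 1/2 < q1 := by
    have h := hcompl true
    rw [← hq1def] at h
    linarith [hA3₁, h]
  have hq0nn : 0 ≤ q0 :=
    div_nonneg (pr_nonneg μ hnn _) (le_of_lt hX0pos)
  have hq1le1 : q1 ≤ 1 := by
    rw [hq1def, cpr, div_le_one hX1pos]
    exact pr_mono μ hnn _ _ (fun ω h => h.2)
  -- P(Y=1 ∧ X=x) = q_x * P(X=x) type facts, and decomposition of P(Y=1 ∧ A=a)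
  have keyAX : ∀ (a : α) (x : Bool),
      pr μ (fun ω => (ω.1 = a ∧ ω.2.2 = true) ∧ ω.2.1 = x) =
      pr μ (fun ω => ω.1 = a ∧ ω.2.1 = x) *
        cpr μ (fun ω => ω.2.2 = true) (fun ω => ω.2.1 = x) := by
    intro a x
    have hx : (0:ℝ) < pr μ (fun ω => ω.2.1 = x) := by cases x; exacts [hX0pos, hX1pos]
    have h := hCI a true x hx
    rw [cpr, cpr, div_eq_iff (ne_of_gt hx)] at h
    rw [h]
    field_simp
  -- r a := P(Y=1 | A=a)
  set r : α → ℝ := fun a => cpr μ (fun ω => ω.2.2 = true) (fun ω => ω.1 = a) with hrdef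
  have hYA : ∀ a : α, pr μ (fun ω => ω.2.2 = true ∧ ω.1 = a) =
      pr μ (fun ω => ω.1 = a ∧ ω.2.1 = false) * q0 +
      pr μ (fun ω => ω.1 = a ∧ ω.2.1 = true) * q1 := by
    intro a
    have h := pr_split μ (fun ω => ω.2.1) (fun ω => ω.2.2 = true ∧ ω.1 = a)
    rw [pr_congr μ (fun ω => (ω.2.2 = true ∧ ω.1 = a) ∧ ω.2.1 = false)
        (fun ω => (ω.1 = a ∧ ω.2.2 = true) ∧ ω.2.1 = false)
        (fun ω => by constructor <;> rintro ⟨⟨h1, h2⟩, h3⟩ <;> exact ⟨⟨h2, h1⟩, h3⟩),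
      pr_congr μ (fun ω => (ω.2.2 = true ∧ ω.1 = a) ∧ ω.2.1 = true)
        (fun ω => (ω.1 = a ∧ ω.2.2 = true) ∧ ω.2.1 = true)
        (fun ω => by constructor <;> rintro ⟨⟨h1, h2⟩, h3⟩ <;> exact ⟨⟨h2, h1⟩, h3⟩),
      keyAX a false, keyAX a true] at h
    exact h
  have hApart : ∀ a : α, pr μ (fun ω => ω.1 = a ∧ ω.2.1 = false) +
      pr μ (fun ω => ω.1 = a ∧ ω.2.1 = true) = pr μ (fun ω => ω.1 = a) :=
    fun a => (pr_split μ (fun ω => ω.2.1) (fun ω => ω.1 = a)).symm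
  -- bounds q0 ≤ r a ≤ q1
  have hrlb : ∀ a : α, q0 ≤ r a := by
    intro a
    have hs := pr_nonneg μ hnn (fun ω => ω.1 = a ∧ ω.2.1 = false)
    have ht := pr_nonneg μ hnn (fun ω => ω.1 = a ∧ ω.2.1 = true)
    rw [hrdef]
    simp only [cpr]
    rw [le_div_iff₀ (hA a)]
    rw [hYA a]
    nlinarith [hApart a, hq0half, hq1half]
  have hrub : ∀ a : α, r a ≤ q1 := by
    intro a
    have hs := pr_nonneg μ hnn (fun ω => ω.1 = a ∧ ω.2.1 = false)
    have ht := pr_nonneg μ hnn (fun ω => ω.1 = a ∧ ω.2.1 = true)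
    rw [hrdef]
    simp only [cpr]
    rw [div_le_iff₀ (hA a)]
    rw [hYA a]
    nlinarith [hApart a, hq0half, hq1half]
  set m : ℝ := Finset.univ.inf' Finset.univ_nonempty r with hmdef
  set M : ℝ := Finset.univ.sup' Finset.univ_nonempty r with hMdef
  have hmq0 : q0 ≤ m := Finset.le_inf' _ _ (fun a _ => hrlb a)
  have hMq1 : M ≤ q1 := Finset.sup'_le _ _ (fun a _ => hrub a)
  -- P(Y=1) = p0*q0 + p1*q1
  have hYrep : pr μ (fun ω => ω.2.2 = true) = p0 * q0 + p1 * q1 := by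
    have h := pr_split μ (fun ω => ω.2.1) (fun ω => ω.2.2 = true)
    rw [h]
    rw [hq0def, hq1def, cpr, cpr]
    field_simp
    have e0 : p0 / pr μ (fun ω => ω.2.1 = false) = 1 := div_self (ne_of_gt hX0pos)
    have e1 : p1 / pr μ (fun ω => ω.2.1 = true) = 1 := div_self (ne_of_gt hX1pos)
    rw [mul_div_assoc, mul_div_assoc, e0, e1]
    ring
  have hYpos : 0 < pr μ (fun ω => ω.2.2 = true) := by
    rw [hYrep]
    nlinarith [hX0pos, hX1pos, hq0nn, hq1half]
  have hYlt1 : pr μ (fun ω => ω.2.2 = true) < 1 := by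
    rw [hYrep]
    nlinarith [hX0pos, hX1pos, hq0half, hq1le1, hXsum]
  -- P(Y=1) = ∑ P(A=a) * r a, hence m ≤ Y ≤ M
  have hfiber : ∑ a, pr μ (fun ω => ω.2.2 = true ∧ ω.1 = a)  = pr μ (fun ω => ω.2.2 = true) :=
    pr_sum_first μ (fun ω => ω.2.2 = true)
  have hAfiber : ∑ a, pr μ (fun ω => ω.1 = a) = 1 := by
    have h := pr_sum_first μ (fun _ : α × Bool × Bool => True)
    simp only [true_and] at h
    rw [h, pr_true, hsum]
  have hrA : ∀ a : α, pr μ (fun ω => ω.2.2 = true ∧ ω.1 = a) = r a * pr μ (fun ω => ω.1 = a) := by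
    intro a
    rw [hrdef]
    simp only [cpr]
    rw [div_mul_cancel₀ _ (ne_of_gt (hA a))]
  have hYM : pr μ (fun ω => ω.2.2 = true) ≤ M := by
    calc pr μ (fun ω => ω.2.2 = true) = ∑ a, pr μ (fun ω => ω.2.2 = true ∧ ω.1 = a) := hfiber.symm
    _ = ∑ a, r a * pr μ (fun ω => ω.1 = a) := Finset.sum_congr rfl (fun a _ => hrA a)
    _ ≤ ∑ a, M * pr μ (fun ω => ω.1 = a) := Finset.sum_le_sum (fun a _ =>
        mul_le_mul_of_nonneg_right (Finset.le_sup' r (Finset.mem_univ a)) (le_of_lt (hA a)))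
    _ = M * ∑ a, pr μ (fun ω => ω.1 = a) := by rw [Finset.mul_sum]
    _ = M := by rw [hAfiber, mul_one]
  have hmY : m ≤ pr μ (fun ω => ω.2.2 = true) := by
    calc m = m * ∑ a, pr μ (fun ω => ω.1 = a) := by rw [hAfiber, mul_one]
    _ = ∑ a, m * pr μ (fun ω => ω.1 = a) := by rw [Finset.mul_sum]
    _ ≤ ∑ a, r a * pr μ (fun ω => ω.1 = a) := Finset.sum_le_sum (fun a _ =>
        mul_le_mul_of_nonneg_right (Finset.inf'_le r (Finset.mem_univ a)) (le_of_lt (hA a)))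
    _ = ∑ a, pr μ (fun ω => ω.2.2 = true ∧ ω.1 = a) := Finset.sum_congr rfl (fun a _ => (hrA a).symm)
    _ = pr μ (fun ω => ω.2.2 = true) := hfiber
  have hMpos : 0 < M := lt_of_lt_of_le hYpos hYM
  have hmlt1 : m < 1 := lt_of_le_of_lt hmY hYlt1
  refine ⟨?_, ?_, hMpos, hmlt1⟩
  · rw [div_le_iff₀ (by linarith : (0:ℝ) < 1 - m)]
    nlinarith [hYrep, hXsum, hX0pos, hX1pos, hmq0, hq1le1]
  · rw [le_div_iff₀ hMpos]
    nlinarith [hYrep, hX0pos, hq0nn, hMq1]
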